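/- Let φ : [0,∞) → ℝ be twice continuously differentiable with φ(x) = x+1 on [0,1], φ(x) ≥ x+1 on [0,∞), and lim φ(x)/x = ∞, and let φ₁ be its greatest convex minorant. Then φ₁ is differentiable at every point of (0,∞). -/

import Mathlib

open Filter Set

open Topology

noncomputable def bFun (φ : ℝ → ℝ) (k : ℝ) : ℝ :=
  sInf ((fun x => φ x - k * x) '' Set.Ici (0 : ℝ))

noncomputable def phi1 (φ : ℝ → ℝ) (x : ℝ) : ℝ :=
  sSup ((fun k => k * x + bFun φ k) '' Set.univ)

/-- the greatest convex minorant `φ₁` of `φ` is differentiable on `(0,∞)`. -/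
theorem stmt12 (φ φ' φ'' : ℝ → ℝ)
    (hderiv : ∀ x, HasDerivAt φ (φ' x) x)
    (hderiv2 : ∀ x, HasDerivAt φ' (φ'' x) x) (hcont : Continuous φ'')
    (heq : ∀ x ∈ Set.Icc (0 : ℝ) 1, φ x = x + 1)
    (hge : ∀ x ∈ Set.Ici (0 : ℝ), x + 1 ≤ φ x)
    (hgrow : Tendsto (fun x => φ x / x) atTop atTop) :
    ∀ τ ∈ Set.Ioi (0 : ℝ), DifferentiableAt ℝ (phi1 φ) τ := by
  have hφc : Continuous φ := by
    rw [continuous_iff_continuousAt]; exact fun x => (hderiv x).continuousAt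
  -- if a line is strictly below φ on [0,∞), it can be lifted by some ε > 0
  have key : ∀ k c : ℝ, (∀ x ∈ Ici (0:ℝ), c < φ x - k * x) →
      ∃ ε > 0, ∀ x ∈ Ici (0:ℝ), c + ε ≤ φ x - k * x := by
    intro k c hc
    obtain ⟨M, hM⟩ := (hgrow.eventually_ge_atTop (|k| + |c| + 1)).exists_forall_of_atTop
    set M' : ℝ := max M 1 with hM'
    have hcont' : ContinuousOn (fun x => φ x - k * x) (Icc (0:ℝ) M') :=
      (hφc.sub (continuous_const.mul continuous_id)).continuousOn
    obtain ⟨x₀, hx₀mem, hx₀min⟩ := isCompact_Icc.exists_isMinOn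
      ⟨0, le_refl 0, le_max_of_le_right zero_le_one⟩ hcont'
    have hx₀pos : c < φ x₀ - k * x₀ := hc x₀ hx₀mem.1
    refine ⟨min (φ x₀ - k * x₀ - c) 1, lt_min (by linarith) zero_lt_one, ?_⟩
    intro x hx
    rcases le_total x M' with h | h
    · have h3 : φ x₀ - k * x₀ ≤ φ x - k * x := hx₀min ⟨hx, h⟩
      linarith [min_le_left (φ x₀ - k * x₀ - c) 1]
    · have hx1 : (1:ℝ) ≤ x := le_trans (le_max_right M 1) h
      have hxM : M ≤ x := le_trans (le_max_left M 1) h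
      have hxpos : (0:ℝ) < x := lt_of_lt_of_le zero_lt_one hx1
      have hφx : (|k| + |c| + 1) * x ≤ φ x := by
        rw [← le_div_iff₀ hxpos]; exact hM x hxM
      have e1 : 0 ≤ (|k| - k) * x := mul_nonneg (by linarith [le_abs_self k]) (by linarith)
      have e2 : (|c| + 1) * 1 ≤ (|c| + 1) * x :=
        mul_le_mul_of_nonneg_left hx1 (by positivity)
      have e3 : c ≤ |c| := le_abs_self c
      have e4 : min (φ x₀ - k * x₀ - c) 1 ≤ 1 := min_le_right _ _
      nlinarith
  have hbdd : ∀ k : ℝ, BddBelow ((fun x => φ x - k * x) '' Ici (0:ℝ)) := by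
    intro k
    obtain ⟨M, hM⟩ := (hgrow.eventually_ge_atTop (|k| + 1)).exists_forall_of_atTop
    set M' : ℝ := max M 1 with hM'
    have hcont' : ContinuousOn (fun x => φ x - k * x) (Icc (0:ℝ) M') :=
      (hφc.sub (continuous_const.mul continuous_id)).continuousOn
    obtain ⟨x₀, hx₀mem, hx₀min⟩ := isCompact_Icc.exists_isMinOn
      ⟨0, le_refl 0, le_max_of_le_right zero_le_one⟩ hcont'
    refine ⟨min (φ x₀ - k * x₀) 0, ?_⟩
    rintro _ ⟨x, hx, rfl⟩
    show min (φ x₀ - k * x₀) 0 ≤ φ x - k * x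
    rcases le_total x M' with h | h
    · have h3 : φ x₀ - k * x₀ ≤ φ x - k * x := hx₀min ⟨hx, h⟩
      linarith [min_le_left (φ x₀ - k * x₀) (0:ℝ)]
    · have hx1 : (1:ℝ) ≤ x := le_trans (le_max_right M 1) h
      have hxM : M ≤ x := le_trans (le_max_left M 1) h
      have hxpos : (0:ℝ) < x := lt_of_lt_of_le zero_lt_one hx1
      have hφx : (|k| + 1) * x ≤ φ x := by
        rw [← le_div_iff₀ hxpos]; exact hM x hxM
      have e1 : 0 ≤ (|k| - k) * x := mul_nonneg (by linarith [le_abs_self k]) (by linarith)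
      have e4 : min (φ x₀ - k * x₀) (0:ℝ) ≤ 0 := min_le_right _ _
      nlinarith
  have hbFun_le : ∀ k : ℝ, ∀ x ∈ Ici (0:ℝ), bFun φ k ≤ φ x - k * x := by
    intro k x hx
    exact csInf_le (hbdd k) ⟨x, hx, rfl⟩
  have hSne : ∀ x : ℝ, ((fun k => k * x + bFun φ k) '' univ).Nonempty :=
    fun x => ⟨_, 0, trivial, rfl⟩
  have hSbdd : ∀ x ∈ Ici (0:ℝ), BddAbove ((fun k => k * x + bFun φ k) '' univ) := by
    intro x hx
    refine ⟨φ x, ?_⟩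
    rintro _ ⟨k, -, rfl⟩
    have := hbFun_le k x hx
    show k * x + bFun φ k ≤ φ x
    linarith
  have hp_le : ∀ x ∈ Ici (0:ℝ), phi1 φ x ≤ φ x := by
    intro x hx
    refine csSup_le (hSne x) ?_
    rintro _ ⟨k, -, rfl⟩
    have := hbFun_le k x hx
    show k * x + bFun φ k ≤ φ x
    linarith
  have hp_ge : ∀ k : ℝ, ∀ x ∈ Ici (0:ℝ), k * x + bFun φ k ≤ phi1 φ x := by
    intro k x hx
    exact le_csSup (hSbdd x hx) ⟨k, trivial, rfl⟩
  have hconv : ConvexOn ℝ (Ici 0) (phi1 φ) := by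
    refine ⟨convex_Ici 0, ?_⟩
    intro x hx y hy a b ha hb hab
    refine csSup_le (hSne _) ?_
    rintro _ ⟨k, -, rfl⟩
    have h1 := mul_le_mul_of_nonneg_left (hp_ge k x hx) ha
    have h2 := mul_le_mul_of_nonneg_left (hp_ge k y hy) hb
    have h3 : a * (k * x + bFun φ k) + b * (k * y + bFun φ k)
        = k * (a * x + b * y) + (a + b) * bFun φ k := by ring
    rw [hab, one_mul] at h3
    simp only [smul_eq_mul]
    show k * (a * x + b * y) + bFun φ k ≤ a * phi1 φ x + b * phi1 φ y
    linarith
  intro τ hτ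
  simp only [mem_Ioi] at hτ
  set f : ℝ → ℝ := phi1 φ with hf
  set s : ℝ → ℝ := slope f τ with hs
  have hτmem : τ ∈ Ici (0:ℝ) := le_of_lt hτ
  have hmono : MonotoneOn s (Ici (0:ℝ) \ {τ}) := hconv.slope_mono hτmem
  have hhalf : τ/2 ∈ Ioo (0:ℝ) τ := ⟨by linarith, by linarith⟩
  have hhalf' : τ/2 ∈ Ici (0:ℝ) \ {τ} :=
    ⟨le_of_lt hhalf.1, by simp only [mem_singleton_iff]; exact ne_of_lt hhalf.2⟩
  have hone : τ + 1 ∈ Ioi τ := mem_Ioi.mpr (by linarith)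
  have hone' : τ + 1 ∈ Ici (0:ℝ) \ {τ} :=
    ⟨by simp only [mem_Ici]; linarith,
     by simp only [mem_singleton_iff]; intro h; linarith⟩
  have hsubL : Ioo (0:ℝ) τ ⊆ Ici (0:ℝ) \ {τ} := fun x hx =>
    ⟨le_of_lt hx.1, by simp only [mem_singleton_iff]; exact ne_of_lt hx.2⟩
  have hsubR : Ioi τ ⊆ Ici (0:ℝ) \ {τ} := fun x hx =>
    ⟨le_of_lt (lt_trans hτ hx), by simp only [mem_singleton_iff]; exact ne_of_gt hx⟩
  set A : ℝ := sSup (s '' Ioo 0 τ) with hA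
  set B : ℝ := sInf (s '' Ioi τ) with hB
  have hbddA : BddAbove (s '' Ioo 0 τ) := by
    refine ⟨s (τ + 1), ?_⟩
    rintro _ ⟨x, hx, rfl⟩
    exact hmono (hsubL hx) hone' (by have := hx.2; linarith)
  have hbddB : BddBelow (s '' Ioi τ) := by
    refine ⟨s (τ/2), ?_⟩
    rintro _ ⟨x, hx, rfl⟩
    exact hmono hhalf' (hsubR hx) (by have := mem_Ioi.mp hx; linarith)
  have hneL : (Ioo (0:ℝ) τ).Nonempty := ⟨τ/2, hhalf⟩
  have hneR : (Ioi τ).Nonempty := ⟨τ + 1, hone⟩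
  have htendL : Tendsto s (𝓝[<] τ) (𝓝 A) :=
    MonotoneOn.tendsto_nhdsWithin_Ioo_left hneL (hmono.mono hsubL) hbddA
  have htendR : Tendsto s (𝓝[>] τ) (𝓝 B) :=
    MonotoneOn.tendsto_nhdsGT (hmono.mono hsubR) hbddB
  have hAB : A ≤ B := by
    refine csSup_le (hneL.image s) ?_
    rintro _ ⟨x, hx, rfl⟩
    refine le_csInf (hneR.image s) ?_
    rintro _ ⟨y, hy, rfl⟩
    exact hmono (hsubL hx) (hsubR hy) (le_of_lt (lt_trans hx.2 hy))
  have hslope_le : ∀ x ∈ Ici (0:ℝ), x < τ → s x ≤ A := by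
    intro x hx hlt
    rcases lt_or_eq_of_le (mem_Ici.mp hx) with h | h
    · exact le_csSup hbddA ⟨x, ⟨h, hlt⟩, rfl⟩
    · have h1 : s x ≤ s (τ/2) :=
        hmono ⟨hx, by simp only [mem_singleton_iff]; exact ne_of_lt hlt⟩ hhalf'
          (by rw [← h]; linarith [hhalf.1])
      exact le_trans h1 (le_csSup hbddA ⟨τ/2, hhalf, rfl⟩)
  have hslope_ge : ∀ x : ℝ, τ < x → B ≤ s x := fun x hx =>
    csInf_le hbddB ⟨x, hx, rfl⟩
  have hsub : ∀ k : ℝ, A ≤ k → k ≤ B → ∀ x ∈ Ici (0:ℝ), f τ + k * (x - τ) ≤ f x := by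
    intro k hkA hkB x hx
    rcases lt_trichotomy x τ with h | h | h
    · have h1 : (f x - f τ) / (x - τ) ≤ k := by
        have h2 := le_trans (hslope_le x hx h) hkA
        rw [hs, slope_def_field] at h2
        exact h2
      have h2 : x - τ < 0 := by linarith
      rw [div_le_iff_of_neg h2] at h1
      linarith
    · subst h; simp
    · have h1 : k ≤ (f x - f τ) / (x - τ) := by
        have h2 := le_trans hkB (hslope_ge x h)
        rw [hs, slope_def_field] at h2
        exact h2
      have h2 : (0:ℝ) < x - τ := by linarith
      rw [le_div_iff₀ h2] at h1
      linarith
  have hfτ_le : f τ ≤ φ τ := hp_le τ hτmem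
  have hABeq : A = B := by
    rcases lt_or_eq_of_le hfτ_le with hlt | heqτ
    · by_contra hne
      have hABlt : A < B := lt_of_le_of_ne hAB hne
      set k : ℝ := (A + B)/2 with hk
      have hkA : A < k := by rw [hk]; linarith
      have hkB : k < B := by rw [hk]; linarith
      have hstrict : ∀ x ∈ Ici (0:ℝ), f τ - k * τ < φ x - k * x := by
        intro x hx
        rcases lt_trichotomy x τ with h | h | h
        · have h1 := hsub A (le_refl A) hAB x hx
          have h2 := hp_le x hx
          nlinarith [mul_pos (sub_pos.2 hkA) (sub_pos.2 h)]
        · subst h; linarith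
        · have h1 := hsub B hAB (le_refl B) x hx
          have h2 := hp_le x hx
          nlinarith [mul_pos (sub_pos.2 hkB) (sub_pos.2 h)]
      obtain ⟨ε, hεpos, hε⟩ := key k (f τ - k * τ) hstrict
      have hbk : f τ - k * τ + ε ≤ bFun φ k := by
        refine le_csInf ((Set.nonempty_Ici (a := (0:ℝ))).image _) ?_
        rintro _ ⟨x, hx, rfl⟩
        exact hε x hx
      have := hp_ge k τ hτmem
      linarith
    · have haux : ∀ k : ℝ, A ≤ k → k ≤ B → k = φ' τ := by
        intro k hkA hkB
        set g : ℝ → ℝ := fun x => φ x - k * x - (f τ - k * τ) with hg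
        have hgτ : g τ = 0 := by simp only [hg]; rw [heqτ]; ring
        have hgmin : IsLocalMin g τ := by
          have hmem : Ioi (0:ℝ) ∈ 𝓝 τ := Ioi_mem_nhds hτ
          refine Filter.eventually_of_mem hmem ?_
          intro x hx
          have h1 := hsub k hkA hkB x (mem_Ici.mpr (le_of_lt hx))
          have h2 := hp_le x (mem_Ici.mpr (le_of_lt hx))
          show g τ ≤ g x
          rw [hgτ]
          simp only [hg]
          nlinarith
        have hgderiv : HasDerivAt g (φ' τ - k) τ := by
          have h1 : HasDerivAt (fun x => k * x) k τ := by
            simpa using (hasDerivAt_id τ).const_mul k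
          exact ((hderiv τ).sub h1).sub_const _
        have := hgmin.hasDerivAt_eq_zero hgderiv
        linarith
      have h1 := haux A (le_refl A) hAB
      have h2 := haux B hAB (le_refl B)
      rw [h1, h2]
  have hderivf : HasDerivAt f A τ := by
    rw [hasDerivAt_iff_tendsto_slope]
    rw [← nhdsLT_sup_nhdsGT τ, tendsto_sup]
    exact ⟨htendL, by rw [hABeq]; exact htendR⟩
  exact hderivf.differentiableAt
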